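/- arXiv:2510.23423 — 5 statements merged into one kernel-verified Lean document; each statement's English description precedes it below -/
import Mathlib

section
/- Let K > 0 and k₀ ≥ 1. Suppose u : ℕ → ℝ satisfies 0 ≤ u(n) ≤ 1 for all n, and for every k ≥ k₀ one has u(2^k) ≤ (1/10)·u(2^{k-1}) + (K/2^k)·√(u(2^k)). Then, setting C₀ := max(4K², (2^{k₀})²), one has u(2^k) ≤ C₀/(2^k)² for every k ≥ 0. -/
/-- Dyadic renormalisation induction (d > 6 case): if `0 ≤ u ≤ 1` and for every `k ≥ k₀`
one has `u(2^k) ≤ (1/10)·u(2^{k-1}) + (K/2^k)·√(u(2^k))`, then with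
`C₀ := max(4K², (2^{k₀})²)` one has `u(2^k) ≤ C₀/(2^k)²` for every `k ≥ 0`. -/
theorem dyadic_induction_one_arm (K : ℝ) (hK : 0 < K) (k₀ : ℕ) (hk₀ : 1 ≤ k₀)
    (u : ℕ → ℝ) (h0 : ∀ n, 0 ≤ u n) (h1 : ∀ n, u n ≤ 1)
    (hrec : ∀ k, k₀ ≤ k →
      u (2 ^ k) ≤ (1 / 10) * u (2 ^ (k - 1)) + (K / 2 ^ k) * Real.sqrt (u (2 ^ k))) :
    ∀ k : ℕ, u (2 ^ k) ≤ max (4 * K ^ 2) (((2 : ℝ) ^ k₀) ^ 2) / ((2 : ℝ) ^ k) ^ 2 := by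
  set C := max (4 * K ^ 2) (((2 : ℝ) ^ k₀) ^ 2) with hCdef
  have h2k₀ : (2 : ℝ) ≤ 2 ^ k₀ := by
    calc (2 : ℝ) = 2 ^ 1 := by norm_num
    _ ≤ 2 ^ k₀ := pow_le_pow_right₀ (by norm_num) hk₀
  have hC4 : (4 : ℝ) ≤ C := by
    have h := le_max_right (4 * K ^ 2) (((2 : ℝ) ^ k₀) ^ 2)
    nlinarith
  have hCK : 4 * K ^ 2 ≤ C := le_max_left _ _
  intro k
  induction k with
  | zero =>
    simp only [pow_zero, one_pow, div_one]
    linarith [h1 1]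
  | succ k ih =>
    have hp : (0 : ℝ) < (2 : ℝ) ^ (k + 1) := by positivity
    have hpk : (0 : ℝ) < (2 : ℝ) ^ k := by positivity
    have hp2 : (0 : ℝ) < ((2 : ℝ) ^ (k + 1)) ^ 2 := by positivity
    by_cases hk : k + 1 ≤ k₀
    · have h2 : ((2 : ℝ) ^ (k + 1)) ^ 2 ≤ C := by
        have hle : (2 : ℝ) ^ (k + 1) ≤ 2 ^ k₀ := pow_le_pow_right₀ (by norm_num) hk
        have h := le_max_right (4 * K ^ 2) (((2 : ℝ) ^ k₀) ^ 2)
        nlinarith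
      calc u (2 ^ (k + 1)) ≤ 1 := h1 _
      _ ≤ C / ((2 : ℝ) ^ (k + 1)) ^ 2 := (one_le_div hp2).mpr h2
    · push_neg at hk
      have hrec' := hrec (k + 1) (le_of_lt hk)
      simp only [Nat.add_sub_cancel] at hrec'
      set x := u (2 ^ (k + 1)) with hx
      set s := Real.sqrt x with hs
      have hs0 : 0 ≤ s := Real.sqrt_nonneg _
      have hss : s ^ 2 = x := Real.sq_sqrt (h0 _)
      have hpow : ((2 : ℝ) ^ (k + 1)) = 2 * 2 ^ k := by ring
      have h10 : (1 / 10) * u (2 ^ k) ≤ (2 / 5) * C / ((2 : ℝ) ^ (k + 1)) ^ 2 := by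
        have h1' : (1 / 10) * u (2 ^ k) ≤ (1 / 10) * (C / ((2 : ℝ) ^ k) ^ 2) := by linarith
        have : (1 / 10) * (C / ((2 : ℝ) ^ k) ^ 2) = (2 / 5) * C / ((2 : ℝ) ^ (k + 1)) ^ 2 := by
          rw [hpow]; field_simp; ring
        linarith
      by_cases hcase : (2 / 5) * C / ((2 : ℝ) ^ (k + 1)) ^ 2 ≤ (K / 2 ^ (k + 1)) * s
      · -- large case: x ≤ 2*(K/2^(k+1))*s
        have hx2 : x ≤ 2 * ((K / 2 ^ (k + 1)) * s) := by linarith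
        have hsle : s ≤ 2 * K / 2 ^ (k + 1) := by
          rcases eq_or_lt_of_le hs0 with h | h
          · rw [← h]; positivity
          · have hmm : s * s ≤ (2 * K / 2 ^ (k + 1)) * s := by
              have hsx : s * s = x := by rw [← hss]; ring
              rw [hsx]
              calc x ≤ 2 * (K / 2 ^ (k + 1) * s) := hx2
              _ = (2 * K / 2 ^ (k + 1)) * s := by ring
            exact le_of_mul_le_mul_right hmm h
        have : x ≤ 4 * K ^ 2 / ((2 : ℝ) ^ (k + 1)) ^ 2 := by
          rw [← hss]
          have h4 : (2 * K / 2 ^ (k + 1)) ^ 2 = 4 * K ^ 2 / ((2 : ℝ) ^ (k + 1)) ^ 2 := by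
            field_simp; ring
          nlinarith
        calc x ≤ 4 * K ^ 2 / ((2 : ℝ) ^ (k + 1)) ^ 2 := this
        _ ≤ C / ((2 : ℝ) ^ (k + 1)) ^ 2 := by gcongr
      · push_neg at hcase
        have : x ≤ (4 / 5) * C / ((2 : ℝ) ^ (k + 1)) ^ 2 := by
          have := hcase.le
          calc x ≤ (1 / 10) * u (2 ^ k) + (K / 2 ^ (k + 1)) * s := hrec'
          _ ≤ (2 / 5) * C / ((2 : ℝ) ^ (k + 1)) ^ 2 + (2 / 5) * C / ((2 : ℝ) ^ (k + 1)) ^ 2 := by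
              linarith
          _ = (4 / 5) * C / ((2 : ℝ) ^ (k + 1)) ^ 2 := by ring
        have hC0 : (0 : ℝ) ≤ C := by linarith
        have : (4 / 5) * C / ((2 : ℝ) ^ (k + 1)) ^ 2 ≤ C / ((2 : ℝ) ^ (k + 1)) ^ 2 := by
          gcongr
          linarith
        linarith
end

section
/- Let K > 0 and k₀ ≥ 3. Suppose u : ℕ → ℝ satisfies 0 ≤ u(n) ≤ 1 for all n, and for every k ≥ k₀ one has u(2^k) ≤ (1/10)·u(2^{k-1}) + (K·√k/2^k)·√(u(2^k)) + K/(2^k)³. Then, setting C₀ := max(4K², (2^{k₀})²), one has u(2^k) ≤ C₀·k/(2^k)² for every k ≥ 1. -/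
set_option maxHeartbeats 1000000


/-- Dyadic renormalisation induction with logarithmic correction (d = 6 case): if
`0 ≤ u ≤ 1` and for every `k ≥ k₀ ≥ 3` one has
`u(2^k) ≤ (1/10)·u(2^{k-1}) + (K·√k/2^k)·√(u(2^k)) + K/(2^k)³`, then with
`C₀ := max(4K², (2^{k₀})²)` one has `u(2^k) ≤ C₀·k/(2^k)²` for every `k ≥ 1`. -/
theorem dyadic_induction_one_arm_log (K : ℝ) (hK : 0 < K) (k₀ : ℕ) (hk₀ : 3 ≤ k₀)
    (u : ℕ → ℝ) (h0 : ∀ n, 0 ≤ u n) (h1 : ∀ n, u n ≤ 1)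
    (hrec : ∀ k, k₀ ≤ k →
      u (2 ^ k) ≤ (1 / 10) * u (2 ^ (k - 1))
        + (K * Real.sqrt k / 2 ^ k) * Real.sqrt (u (2 ^ k)) + K / ((2 : ℝ) ^ k) ^ 3) :
    ∀ k : ℕ, 1 ≤ k →
      u (2 ^ k) ≤ max (4 * K ^ 2) (((2 : ℝ) ^ k₀) ^ 2) * k / ((2 : ℝ) ^ k) ^ 2 := by
  set C : ℝ := max (4 * K ^ 2) (((2 : ℝ) ^ k₀) ^ 2) with hCdef
  have hC1 : 4 * K ^ 2 ≤ C := le_max_left _ _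
  have hC2 : ((2 : ℝ) ^ k₀) ^ 2 ≤ C := le_max_right _ _
  have h8 : (8 : ℝ) ≤ (2 : ℝ) ^ k₀ := by
    calc (8 : ℝ) = 2 ^ 3 := by norm_num
      _ ≤ 2 ^ k₀ := pow_le_pow_right₀ (by norm_num) hk₀
  have hC64 : (64 : ℝ) ≤ C := le_trans (by nlinarith) hC2
  have hC0 : (0 : ℝ) ≤ C := by linarith
  have hCK : 2 * K ≤ C := by
    rcases le_or_gt K (1 / 2) with h | h
    · linarith
    · nlinarith
  have base : ∀ k : ℕ, 1 ≤ k → k ≤ k₀ → u (2 ^ k) ≤ C * k / ((2 : ℝ) ^ k) ^ 2 := by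
    intro k hk1 hkk
    rw [le_div_iff₀ (by positivity)]
    have hpow : ((2 : ℝ) ^ k) ^ 2 ≤ C := by
      refine le_trans ?_ hC2
      have : (2 : ℝ) ^ k ≤ (2 : ℝ) ^ k₀ := pow_le_pow_right₀ (by norm_num) hkk
      nlinarith [pow_pos (show (0:ℝ) < 2 by norm_num) k]
    have hk1' : (1 : ℝ) ≤ (k : ℝ) := by exact_mod_cast hk1
    calc u (2 ^ k) * ((2 : ℝ) ^ k) ^ 2 ≤ 1 * ((2 : ℝ) ^ k) ^ 2 :=
          mul_le_mul_of_nonneg_right (h1 _) (by positivity)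
      _ = ((2 : ℝ) ^ k) ^ 2 := one_mul _
      _ ≤ C := hpow
      _ ≤ C * k := le_mul_of_one_le_right hC0 hk1'
  intro k hk
  induction k, hk using Nat.le_induction with
  | base => exact base 1 le_rfl (by omega)
  | succ k hk ih =>
    by_cases hcase : k + 1 ≤ k₀
    · exact base (k + 1) (by omega) hcase
    · have hkk : k₀ ≤ k + 1 := by omega
      have hrec' := hrec (k + 1) hkk
      simp only [Nat.add_sub_cancel] at hrec'
      set a : ℝ := (2 : ℝ) ^ (k + 1) with haa
      have ha0 : (0 : ℝ) < a := by positivity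
      have ha : a = 2 * 2 ^ k := by rw [haa, pow_succ]; ring
      have ha16 : (16 : ℝ) ≤ a := by
        calc (16 : ℝ) = 2 ^ 4 := by norm_num
          _ ≤ 2 ^ (k + 1) := pow_le_pow_right₀ (by norm_num) (by omega)
      set x := u (2 ^ (k + 1)) with hxdef
      have hx0 : 0 ≤ x := h0 _
      set s := Real.sqrt x with hsdef
      have hs0 : 0 ≤ s := Real.sqrt_nonneg _
      have hs2 : s ^ 2 = x := Real.sq_sqrt hx0
      set t := Real.sqrt ((k + 1 : ℕ) : ℝ) with htdef
      have ht0 : 0 ≤ t := Real.sqrt_nonneg _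
      have ht2 : t ^ 2 = (k : ℝ) + 1 := by
        rw [htdef, Real.sq_sqrt (by positivity)]; push_cast; ring
      have hk1' : (1 : ℝ) ≤ (k : ℝ) := by exact_mod_cast hk
      have hk0' : (0 : ℝ) ≤ (k : ℝ) := by linarith
      -- IH multiplied out
      have E1 : u (2 ^ k) * a ^ 2 ≤ 4 * (C * (k : ℝ)) := by
        have h2 : u (2 ^ k) * ((2 : ℝ) ^ k) ^ 2 ≤ C * k :=
          (le_div_iff₀ (by positivity)).mp ih
        calc u (2 ^ k) * a ^ 2 = 4 * (u (2 ^ k) * ((2 : ℝ) ^ k) ^ 2) := by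
              rw [ha]; ring
          _ ≤ 4 * (C * k) := by linarith
      -- sqrt-term bound multiplied out
      have E2 : (K * t / a) * s * a ^ 2 ≤ K ^ 2 * ((k : ℝ) + 1) + x * a ^ 2 / 4 := by
        have expand : (K * t / a) * s * a ^ 2 = K * t * s * a := by
          field_simp
        rw [expand]
        nlinarith [sq_nonneg (K * t - s * a / 2), hs2, ht2, sq_nonneg a, hx0]
      -- error term multiplied out
      have E3 : K / a ^ 3 * a ^ 2 ≤ C / 32 := by
        have expand : K / a ^ 3 * a ^ 2 = K / a := by
          field_simp
        rw [expand, div_le_div_iff₀ ha0 (by norm_num)]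
        have h16 : C * 16 ≤ C * a := mul_le_mul_of_nonneg_left ha16 hC0
        linarith
      have hmul : x * a ^ 2 ≤
          ((1 / 10) * u (2 ^ k) + (K * t / a) * s + K / a ^ 3) * a ^ 2 :=
        mul_le_mul_of_nonneg_right hrec' (by positivity)
      have hbig : x * a ^ 2 ≤ (2 / 5) * (C * (k : ℝ)) + K ^ 2 * ((k : ℝ) + 1)
          + x * a ^ 2 / 4 + C / 32 := by
        have expand : ((1 / 10) * u (2 ^ k) + (K * t / a) * s + K / a ^ 3) * a ^ 2
            = (1 / 10) * (u (2 ^ k) * a ^ 2) + (K * t / a) * s * a ^ 2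
              + K / a ^ 3 * a ^ 2 := by ring
        rw [expand] at hmul
        linarith
      -- conclude
      have hgoal : x ≤ C * ((k : ℝ) + 1) / a ^ 2 := by
        rw [le_div_iff₀ (by positivity)]
        have p1 : 0 ≤ (C - 4 * K ^ 2) * ((k : ℝ) + 1) :=
          mul_nonneg (by linarith) (by linarith)
        have p2 : 0 ≤ C * (k : ℝ) := mul_nonneg hC0 hk0'
        linarith [hbig, p1, p2, hC0]
      have : ((k + 1 : ℕ) : ℝ) = (k : ℝ) + 1 := by push_cast; ring
      rw [this]
      exact hgoal
end

section
/- Let α be a nonempty finite type, let p, q : α → ℝ be probability mass functions (nonnegative, summing to 1) with q(x) > 0 for all x, and let A ⊆ α. Then |p(A) - q(A)| ≤ √(2·max(p(A), q(A))·H(p‖q)), where p(A) = ∑_{x∈A} p(x), q(A) = ∑_{x∈A} q(x), and H(p‖q) = ∑_{x∈α} p(x)·log(p(x)/q(x)) (with the convention 0·log 0 = 0). -/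
open Real Finset

/-- `log u ≥ 2(u-1)/(u+1)` for `u ≥ 1`. -/
lemma aux_log_lb {u : ℝ} (hu : 1 ≤ u) : 2 * (u - 1) / (u + 1) ≤ Real.log u := by
  set f : ℝ → ℝ := fun x => Real.log x + 4 * (x + 1)⁻¹ - 2 with hf
  have hmono : MonotoneOn f (Set.Ici 1) := by
    apply monotoneOn_of_hasDerivWithinAt_nonneg (f' := fun x => x⁻¹ + 4 * (-1 / (x + 1) ^ 2))
      (convex_Ici 1)
    · apply ContinuousOn.sub
      apply ContinuousOn.add
      · exact Real.continuousOn_log.mono (by intro x hx; simp at hx ⊢; linarith)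
      · exact (continuousOn_const.mul ((continuousOn_id.add continuousOn_const).inv₀
          (by intro x hx; simp at hx; exact ne_of_gt (show (0:ℝ) < x + 1 by linarith))))
      · exact continuousOn_const
    · intro x hx
      rw [interior_Ici] at hx
      have hx0 : (0:ℝ) < x := lt_trans one_pos hx
      have h1 : HasDerivAt (fun y : ℝ => Real.log y) x⁻¹ x := Real.hasDerivAt_log hx0.ne'
      have h2 : HasDerivAt (fun y : ℝ => (y + 1)⁻¹) (-1 / (x + 1) ^ 2) x := by
        exact (((hasDerivAt_id x).add_const 1).inv (by simp only [id_eq]; positivity)).congr_deriv (by norm_num)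
      have := (h1.add ((h2.const_mul 4))).sub_const 2
      exact this.hasDerivWithinAt
    · intro x hx
      rw [interior_Ici] at hx
      have hx0 : (0:ℝ) < x := lt_trans one_pos hx
      have h2 : 4 / (x + 1) ^ 2 ≤ x⁻¹ := by
        rw [div_le_iff₀ (by positivity), inv_mul_eq_div, le_div_iff₀ hx0]
        nlinarith [sq_nonneg (x - 1)]
      have : 4 * (-1 / (x + 1) ^ 2) = -(4 / (x + 1) ^ 2) := by ring
      rw [this]
      linarith
  have h := hmono (Set.self_mem_Ici) hu hu
  have hf1 : f 1 = 0 := by norm_num [hf]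
  rw [hf1] at h
  have hu1 : (0:ℝ) < u + 1 := by linarith
  have : 2 * (u - 1) / (u + 1) = 2 - 4 * (u + 1)⁻¹ := by field_simp; ring
  rw [this]
  have h' : (0:ℝ) ≤ Real.log u + 4 * (u + 1)⁻¹ - 2 := h
  linarith

/-- `u log u - u + 1 ≥ (u-1)²/2` for `0 ≤ u ≤ 1`. -/
lemma aux_small {u : ℝ} (hu0 : 0 ≤ u) (hu1 : u ≤ 1) :
    (u - 1) ^ 2 / 2 ≤ u * Real.log u - u + 1 := by
  set f : ℝ → ℝ := fun x => x * Real.log x - x + 1 - (x - 1) ^ 2 / 2 with hf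
  have hanti : AntitoneOn f (Set.Icc 0 1) := by
    apply antitoneOn_of_hasDerivWithinAt_nonpos
      (f' := fun x => (Real.log x + 1) - 1 - (x - 1)) (convex_Icc 0 1)
    · exact ((Real.continuous_mul_log.continuousOn.sub continuousOn_id).add
        continuousOn_const).sub ((continuousOn_id.sub continuousOn_const).pow 2 |>.div_const 2)
    · intro x hx
      rw [interior_Icc] at hx
      have hx0 : x ≠ 0 := ne_of_gt hx.1
      have h1 := Real.hasDerivAt_mul_log hx0
      have h2 : HasDerivAt (fun y : ℝ => (y - 1) ^ 2 / 2) (x - 1) x := by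
        have : HasDerivAt (fun y : ℝ => (y - 1) ^ 2) (2 * (x - 1)) x := by
          exact (((hasDerivAt_id x).sub_const 1).pow 2).congr_deriv (by norm_num)
        simpa using this.div_const 2
      exact (((h1.sub (hasDerivAt_id x)).add_const 1).sub h2).hasDerivWithinAt
    · intro x hx
      rw [interior_Icc] at hx
      have := Real.log_le_sub_one_of_pos hx.1
      linarith
  have h := hanti (Set.mem_Icc.2 ⟨hu0, hu1⟩) (Set.mem_Icc.2 ⟨zero_le_one, le_refl 1⟩) hu1
  have hf1 : f 1 = 0 := by norm_num [hf]
  rw [hf1] at h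
  have h' : (0:ℝ) ≤ u * Real.log u - u + 1 - (u - 1) ^ 2 / 2 := h
  linarith

/-- Pointwise refined inequality. -/
lemma aux_pointwise {t s : ℝ} (ht : 0 ≤ t) (hs : 0 < s) :
    (t - s) ^ 2 / (2 * max t s) ≤ t * Real.log (t / s) - t + s := by
  rcases le_or_gt t s with h | h
  · rw [max_eq_right h]
    rcases eq_or_lt_of_le ht with rfl | ht0
    · simp only [zero_mul, zero_sub, sub_zero, neg_zero, zero_add]
      rw [neg_pow, div_le_iff₀ (by positivity)]
      ring_nf
      nlinarith
    · have hu0 : 0 ≤ t / s := by positivity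
      have hu1 : t / s ≤ 1 := by rw [div_le_one hs]; exact h
      have key := aux_small hu0 hu1
      have h2 := mul_le_mul_of_nonneg_left key hs.le
      have e1 : s * ((t / s - 1) ^ 2 / 2) = (t - s) ^ 2 / (2 * s) := by
        field_simp
      have e2 : s * (t / s * Real.log (t / s) - t / s + 1)
          = t * Real.log (t / s) - t + s := by field_simp
      rw [e1, e2] at h2
      exact h2
  · rw [max_eq_left h.le]
    have ht0 : 0 < t := lt_trans hs h
    have hu : 1 ≤ t / s := by rw [le_div_iff₀ hs]; linarith
    have key := aux_log_lb hu
    have e0 : 2 * (t / s - 1) / (t / s + 1) = 2 * (t - s) / (t + s) := by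
      rw [div_eq_div_iff (by positivity) (by positivity)]
      field_simp
    rw [e0] at key
    have h2 := mul_le_mul_of_nonneg_left key ht0.le
    have e1 : t * (2 * (t - s) / (t + s)) - t + s = (t - s) ^ 2 / (t + s) := by
      field_simp; ring
    have h3 : (t - s) ^ 2 / (2 * t) ≤ (t - s) ^ 2 / (t + s) :=
      div_le_div_of_nonneg_left (sq_nonneg _) (by positivity) (by linarith)
    calc (t - s) ^ 2 / (2 * t) ≤ (t - s) ^ 2 / (t + s) := h3
      _ = t * (2 * (t - s) / (t + s)) - t + s := e1.symm
      _ ≤ t * Real.log (t / s) - t + s := by linarith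

lemma aux_pointwise_nonneg {t s : ℝ} (ht : 0 ≤ t) (hs : 0 < s) :
    0 ≤ t * Real.log (t / s) - t + s := by
  refine le_trans ?_ (aux_pointwise ht hs)
  have : 0 < max t s := lt_max_of_lt_right hs
  positivity

/-- Log-sum inequality over a finset. -/
lemma aux_logsum {α : Type*} (A : Finset α) (p q : α → ℝ)
    (hp : ∀ x ∈ A, 0 ≤ p x) (hq : ∀ x ∈ A, 0 < q x) (hb : 0 < ∑ x ∈ A, q x) :
    (∑ x ∈ A, p x) * Real.log ((∑ x ∈ A, p x) / (∑ x ∈ A, q x)) ≤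
      ∑ x ∈ A, p x * Real.log (p x / q x) := by
  set a := ∑ x ∈ A, p x with ha
  set b := ∑ x ∈ A, q x with hbdef
  have ha0 : 0 ≤ a := Finset.sum_nonneg hp
  have hjensen := Real.convexOn_mul_log.map_sum_le (t := A) (w := fun x => q x / b)
    (p := fun x => p x / q x)
    (fun i hi => div_nonneg (hq i hi).le hb.le)
    (by rw [← Finset.sum_div, ← hbdef, div_self hb.ne'])
    (fun i hi => Set.mem_Ici.2 (div_nonneg (hp i hi) (hq i hi).le))
  have e1 : ∑ i ∈ A, (q i / b) • (p i / q i) = a / b := by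
    rw [ha, Finset.sum_div]
    refine Finset.sum_congr rfl fun i hi => ?_
    have := (hq i hi).ne'
    rw [smul_eq_mul]
    field_simp [hb.ne']
  rw [e1] at hjensen
  have e2 : ∑ i ∈ A, (q i / b) • (p i / q i * Real.log (p i / q i))
      = (∑ i ∈ A, p i * Real.log (p i / q i)) / b := by
    rw [Finset.sum_div]
    refine Finset.sum_congr rfl fun i hi => ?_
    have := (hq i hi).ne'
    rw [smul_eq_mul]
    field_simp [hb.ne']
  rw [e2] at hjensen
  have h3 := mul_le_mul_of_nonneg_left hjensen hb.le
  have e3 : b * (a / b * Real.log (a / b)) = a * Real.log (a / b) := by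
    field_simp
  have e4 : b * ((∑ i ∈ A, p i * Real.log (p i / q i)) / b)
      = ∑ i ∈ A, p i * Real.log (p i / q i) := by field_simp
  rw [e3, e4] at h3
  exact h3

/-- Refined Pinsker inequality (Dewan–Muirhead, Lemma 2.3): for probability mass
functions `p, q` on a nonempty finite type with `q > 0` and a subset `A`,
`|p(A) - q(A)| ≤ √(2·max(p(A), q(A))·H(p‖q))` where
`H(p‖q) = ∑_x p(x)·log(p(x)/q(x))` (with `0·log 0 = 0`). -/
theorem refined_pinsker {α : Type*} [Fintype α] [Nonempty α]
    (p q : α → ℝ) (A : Finset α)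
    (hp : ∀ x, 0 ≤ p x) (hq : ∀ x, 0 < q x)
    (hps : ∑ x, p x = 1) (hqs : ∑ x, q x = 1) :
    |∑ x ∈ A, p x - ∑ x ∈ A, q x| ≤
      Real.sqrt (2 * max (∑ x ∈ A, p x) (∑ x ∈ A, q x) *
        ∑ x, p x * Real.log (p x / q x)) := by
  classical
  rcases A.eq_empty_or_nonempty with rfl | hA
  · simp
  set a := ∑ x ∈ A, p x with ha
  set b := ∑ x ∈ A, q x with hb
  set H := ∑ x, p x * Real.log (p x / q x) with hH
  have hb0 : 0 < b := Finset.sum_pos (fun i _ => hq i) hA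
  have hm0 : 0 < max a b := lt_max_of_lt_right hb0
  -- H as a sum of nonneg pointwise terms
  have hHalt : H = ∑ x, (p x * Real.log (p x / q x) - p x + q x) := by
    rw [hH]
    rw [Finset.sum_add_distrib, Finset.sum_sub_distrib, hps, hqs]
    ring
  have hsplit : ∑ x, (p x * Real.log (p x / q x) - p x + q x)
      = ∑ x ∈ A, (p x * Real.log (p x / q x) - p x + q x)
        + ∑ x ∈ Aᶜ, (p x * Real.log (p x / q x) - p x + q x) := by
    rw [Finset.sum_add_sum_compl]
  have hcompl : 0 ≤ ∑ x ∈ Aᶜ, (p x * Real.log (p x / q x) - p x + q x) :=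
    Finset.sum_nonneg fun i _ => aux_pointwise_nonneg (hp i) (hq i)
  have hAsum : ∑ x ∈ A, (p x * Real.log (p x / q x) - p x + q x)
      = (∑ x ∈ A, p x * Real.log (p x / q x)) - a + b := by
    rw [Finset.sum_add_distrib, Finset.sum_sub_distrib, ha, hb]
  have hls := aux_logsum A p q (fun i _ => hp i) (fun i _ => hq i) hb0
  have hpw := aux_pointwise (t := a) (s := b) (Finset.sum_nonneg fun i _ => hp i) hb0
  have hkey : (a - b) ^ 2 / (2 * max a b) ≤ H := by
    rw [hHalt, hsplit, hAsum]
    calc (a - b) ^ 2 / (2 * max a b) ≤ a * Real.log (a / b) - a + b := hpw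
      _ ≤ (∑ x ∈ A, p x * Real.log (p x / q x)) - a + b := by linarith
      _ ≤ _ := le_add_of_nonneg_right hcompl
  have hsq : (a - b) ^ 2 ≤ 2 * max a b * H := by
    rw [div_le_iff₀ (by positivity)] at hkey
    linarith [hkey]
  calc |a - b| = Real.sqrt ((a - b) ^ 2) := (Real.sqrt_sq_eq_abs _).symm
    _ ≤ Real.sqrt (2 * max a b * H) := Real.sqrt_le_sqrt hsq
end

section
/- Let d ≥ 7. The double sum ∑_{y,z ∈ ℤ^d} (max(1,‖y‖_∞))^{2-d}·(max(1,‖y-z‖_∞))^{2-d}·(max(1,‖z‖_∞))^{2-d} is finite. -/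
theorem oneDim (s : ℝ) (hs : 1 < s) : Summable (fun k : ℤ => (max 1 |(k:ℝ)|) ^ (-s)) := by
  have h1 := Real.summable_abs_int_rpow hs
  have h2 : Summable (fun k : ℤ => Set.indicator {0} (fun _ => (1:ℝ)) k) :=
    summable_of_finite_support ((Set.finite_singleton (0:ℤ)).subset Set.support_indicator_subset)
  refine (h2.add h1).of_nonneg_of_le (fun k => Real.rpow_nonneg (by positivity) _) fun k => ?_
  rcases eq_or_ne k 0 with rfl | hk
  · simp; exact Real.rpow_nonneg le_rfl _
  · have h : max 1 |(k:ℝ)| = |(k:ℝ)| := by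
      have : (1:ℝ) ≤ |(k:ℝ)| := by
        rw [← Int.cast_abs]; exact_mod_cast Int.one_le_abs hk
      simp [this]
    rw [h]
    simp only [Set.indicator, Set.mem_singleton_iff, hk, if_false, zero_add, le_refl]

theorem piProd (g : ℤ → ℝ) (hg : Summable g) (hg0 : ∀ k, 0 ≤ g k) :
    ∀ n : ℕ, Summable (fun y : Fin n → ℤ => ∏ i, g (y i)) := by
  intro n
  induction n with
  | zero => exact summable_of_finite_support (Set.toFinite _)
  | succ n ih =>
    have h := (hg.mul_of_nonneg ih hg0 (fun y => Finset.prod_nonneg fun i _ => hg0 _))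
    have := h.comp_injective (Fin.consEquiv (fun _ : Fin (n+1) => ℤ)).symm.injective
    refine this.congr fun y => ?_
    simp [Fin.prod_univ_succ, Fin.consEquiv, Fin.tail]

theorem Fsummable (d : ℕ) (hd : 7 ≤ d) :
    Summable (fun y : Fin d → ℤ => (max 1 ‖y‖) ^ ((3/2 : ℝ) * (2 - d))) := by
  have hd7 : (7:ℝ) ≤ d := by exact_mod_cast hd
  have hd0 : (0:ℝ) < d := by linarith
  set p : ℝ := (3/2) * (2 - d) with hp
  have hpneg : p / d ≤ 0 := by
    apply div_nonpos_of_nonpos_of_nonneg _ hd0.le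
    nlinarith
  have hs : 1 < -(p / d) := by
    have h : p / d < -1 := by rw [div_lt_iff₀ hd0]; nlinarith
    linarith
  have hg := oneDim _ hs
  simp only [neg_neg] at hg
  have hsum := piProd _ hg (fun k => Real.rpow_nonneg (by positivity) _) d
  refine hsum.of_nonneg_of_le (fun y => Real.rpow_nonneg (by positivity) _) fun y => ?_
  have hb : ∀ i, (max 1 |((y i : ℤ) : ℝ)|) ≤ max 1 ‖y‖ := fun i =>
    max_le_max le_rfl (by rw [← Int.norm_eq_abs]; exact norm_le_pi_norm y i)
  have h01 : (0:ℝ) < max 1 ‖y‖ := lt_of_lt_of_le one_pos (le_max_left _ _)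
  have hprod : ∏ i, (max 1 |((y i : ℤ) : ℝ)|) ≤ (max 1 ‖y‖) ^ (d : ℕ) := by
    calc ∏ i, (max 1 |((y i : ℤ) : ℝ)|) ≤ ∏ _i : Fin d, max 1 ‖y‖ :=
          Finset.prod_le_prod (fun i _ => by positivity) (fun i _ => hb i)
      _ = (max 1 ‖y‖) ^ (d : ℕ) := by simp
  have hprod0 : (0:ℝ) < ∏ i, (max 1 |((y i : ℤ) : ℝ)|) :=
    Finset.prod_pos fun i _ => lt_of_lt_of_le one_pos (le_max_left _ _)
  calc (max 1 ‖y‖) ^ p = ((max 1 ‖y‖) ^ (d:ℕ)) ^ (p / d) := by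
        rw [← Real.rpow_natCast (max 1 ‖y‖) d, ← Real.rpow_mul h01.le]
        congr 1
        field_simp
    _ ≤ (∏ i, (max 1 |((y i : ℤ) : ℝ)|)) ^ (p / d) :=
        Real.rpow_le_rpow_of_nonpos hprod0 hprod hpneg
    _ = ∏ i, (max 1 |((y i : ℤ) : ℝ)|) ^ (p / d) :=
        (Real.finset_prod_rpow _ _ (fun i _ => by positivity) _).symm

theorem key (A B C : ℝ) (hA : 0 ≤ A) (hB : 0 ≤ B) (hC : 0 ≤ C) :
    A*B*C ≤ (A*B)^(3/2:ℝ) + (B*C)^(3/2:ℝ) + (A*C)^(3/2:ℝ) := by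
  set x := (A*B)^(3/2:ℝ) with hxd
  set y := (B*C)^(3/2:ℝ) with hyd
  set z := (A*C)^(3/2:ℝ) with hzd
  have hx0 : 0 ≤ x := Real.rpow_nonneg (by positivity) _
  have hy0 : 0 ≤ y := Real.rpow_nonneg (by positivity) _
  have hz0 : 0 ≤ z := Real.rpow_nonneg (by positivity) _
  have hcube : (A*B*C)^(3:ℕ) = x*y*z := by
    rw [hxd, hyd, hzd, ← Real.mul_rpow (by positivity) (by positivity),
      ← Real.mul_rpow (by positivity) (by positivity),
      show (A*B)*(B*C)*(A*C) = (A*B*C)^(2:ℕ) by ring,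
      ← Real.rpow_natCast (A*B*C) 2, ← Real.rpow_mul (by positivity)]
    norm_num
  have hle : x*y*z ≤ (x+y+z)^(3:ℕ) := by
    nlinarith [mul_nonneg hx0 hy0, mul_nonneg hy0 hz0, mul_nonneg hx0 hz0,
      mul_nonneg (mul_nonneg hx0 hy0) hz0, mul_nonneg (mul_nonneg hx0 hx0) hy0,
      mul_nonneg (mul_nonneg hx0 hx0) hz0, mul_nonneg (mul_nonneg hy0 hy0) hx0,
      mul_nonneg (mul_nonneg hy0 hy0) hz0, mul_nonneg (mul_nonneg hz0 hz0) hx0,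
      mul_nonneg (mul_nonneg hz0 hz0) hy0, mul_nonneg (mul_nonneg hx0 hx0) hx0,
      mul_nonneg (mul_nonneg hy0 hy0) hy0, mul_nonneg (mul_nonneg hz0 hz0) hz0]
  exact le_of_pow_le_pow_left₀ (by norm_num) (by positivity) (hcube ▸ hle)

theorem key2 (a b c q : ℝ) (ha : 0 < a) (hb : 0 < b) (hc : 0 < c) :
    a^q * b^q * c^q ≤ a^((3/2:ℝ)*q)*b^((3/2:ℝ)*q) + b^((3/2:ℝ)*q)*c^((3/2:ℝ)*q)
      + a^((3/2:ℝ)*q)*c^((3/2:ℝ)*q) := by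
  have e : ∀ u v : ℝ, 0 < u → 0 < v →
      (u^q * v^q) ^ (3/2:ℝ) = u^((3/2:ℝ)*q) * v^((3/2:ℝ)*q) := by
    intro u v hu hv
    rw [Real.mul_rpow (Real.rpow_nonneg hu.le _) (Real.rpow_nonneg hv.le _),
      ← Real.rpow_mul hu.le, ← Real.rpow_mul hv.le, mul_comm q (3/2:ℝ)]
  have := key (a^q) (b^q) (c^q) (Real.rpow_nonneg ha.le _) (Real.rpow_nonneg hb.le _)
    (Real.rpow_nonneg hc.le _)
  rwa [e a b ha hb, e b c hb hc, e a c ha hc] at this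

/-- Finiteness of the open triangle diagram for `d ≥ 7`:
`∑_{y,z ∈ ℤ^d} (1 ∨ ‖y‖)^{2-d}·(1 ∨ ‖y-z‖)^{2-d}·(1 ∨ ‖z‖)^{2-d} < ∞`
(the norm on `Fin d → ℤ` is the sup norm). -/
theorem triangle_diagram_summable (d : ℕ) (hd : 7 ≤ d) :
    Summable (fun yz : (Fin d → ℤ) × (Fin d → ℤ) =>
      (max 1 ‖yz.1‖) ^ ((2 : ℝ) - d) * (max 1 ‖yz.1 - yz.2‖) ^ ((2 : ℝ) - d) *
        (max 1 ‖yz.2‖) ^ ((2 : ℝ) - d)) := by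
  set V := Fin d → ℤ
  set F : V → ℝ := fun y => (max 1 ‖y‖) ^ ((3/2:ℝ) * ((2:ℝ) - d)) with hF
  have hF0 : ∀ y, 0 ≤ F y := fun y => Real.rpow_nonneg (by positivity) _
  have hFs : Summable F := Fsummable d hd
  have T1 : Summable (fun yz : V × V => F yz.1 * F yz.2) :=
    hFs.mul_of_nonneg hFs hF0 hF0
  have inj2 : Function.Injective (fun p : V × V => (p.1, p.1 - p.2)) := by
    intro p q h
    simp only [Prod.mk.injEq] at h
    obtain ⟨h1, h2⟩ := h
    rw [h1] at h2
    exact Prod.ext h1 (sub_right_injective h2)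
  have inj3 : Function.Injective (fun p : V × V => (p.1 - p.2, p.2)) := by
    intro p q h
    simp only [Prod.mk.injEq] at h
    obtain ⟨h1, h2⟩ := h
    rw [h2] at h1
    exact Prod.ext (sub_left_injective h1) h2
  have T2 : Summable (fun yz : V × V => F yz.1 * F (yz.1 - yz.2)) :=
    (T1.comp_injective inj2).congr fun p => rfl
  have T3 : Summable (fun yz : V × V => F (yz.1 - yz.2) * F yz.2) :=
    (T1.comp_injective inj3).congr fun p => rfl
  refine ((T2.add T3).add T1).of_nonneg_of_le (fun yz => by positivity) fun yz => ?_
  exact key2 _ _ _ _ (lt_of_lt_of_le one_pos (le_max_left _ _))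
    (lt_of_lt_of_le one_pos (le_max_left _ _)) (lt_of_lt_of_le one_pos (le_max_left _ _))
end

section
/- Let d = 6. There exists C > 0 such that for every m ≥ 2, ∑_{x,y ∈ Λ_m ⊂ ℤ^6} (max(1,‖x‖_∞))^{-4}·(max(1,‖x-y‖_∞))^{-4}·(max(1,‖y‖_∞))^{-4} ≤ C·log m. -/
/-- The box `Λ_m = {x ∈ ℤ^6 : ‖x‖_∞ ≤ m}`. -/
noncomputable def latticeBox (d m : ℕ) : Finset (Fin d → ℤ) :=
  Finset.Icc (fun _ => -(m : ℤ)) (fun _ => (m : ℤ))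

namespace Tri

abbrev V := Fin 6 → ℤ

/-- The sup-norm of an integer vector, as a natural number. -/
def nn (u : V) : ℕ := Finset.univ.sup fun i => (u i).natAbs

lemma norm_eq (u : V) : ‖u‖ = (nn u : ℝ) := by
  rw [Pi.norm_def, nn]
  have : (fun i : Fin 6 => ‖u i‖₊) = fun i => (((u i).natAbs : ℕ) : NNReal) := by
    ext i
    rw [NNReal.natCast_natAbs]
  rw [this,
    show (fun i : Fin 6 => (((u i).natAbs : ℕ) : NNReal)) =
      (fun n : ℕ => (n : NNReal)) ∘ (fun i => (u i).natAbs) from rfl,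
    ← Finset.comp_sup_eq_sup_comp (fun n : ℕ => (n : NNReal))
      (fun a b => by simp [Nat.cast_max]) (by simp)]
  norm_cast

lemma mem_box {u : V} {M : ℕ} : u ∈ latticeBox 6 M ↔ nn u ≤ M := by
  simp only [latticeBox, Finset.mem_Icc, Pi.le_def, nn, Finset.sup_le_iff, Finset.mem_univ,
    forall_true_left]
  constructor
  · rintro ⟨h1, h2⟩ i
    have := h1 i; have := h2 i; omega
  · intro h
    constructor <;> intro i <;> have := h i <;> omega

lemma le_nn (u : V) (i : Fin 6) : (u i).natAbs ≤ nn u :=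
  Finset.le_sup (f := fun i => (u i).natAbs) (Finset.mem_univ i)

lemma nn_sub_le (x y : V) : nn (x - y) ≤ nn x + nn y := by
  apply Finset.sup_le
  intro i _
  calc ((x - y) i).natAbs = (x i - y i).natAbs := rfl
    _ ≤ (x i).natAbs + (y i).natAbs := Int.natAbs_sub_le _ _
    _ ≤ nn x + nn y := add_le_add (le_nn x i) (le_nn y i)

lemma card_box (M : ℕ) : (latticeBox 6 M).card = (2*M+1)^6 := by
  rw [latticeBox, Pi.card_Icc]
  simp only [Int.card_Icc]
  rw [Finset.prod_const, Finset.card_univ, Fintype.card_fin]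
  congr 1
  omega

/-- `g e k = (k ⊔ 1)^{-e}`. -/
noncomputable def g (e k : ℕ) : ℝ := 1 / ((k ⊔ 1 : ℕ) : ℝ) ^ e

lemma g_nonneg (e k : ℕ) : 0 ≤ g e k := by
  unfold g; positivity

lemma g_zero (e : ℕ) : g e 0 = 1 := by simp [g]

lemma g_anti (e : ℕ) {k l : ℕ} (h : k ≤ l) : g e l ≤ g e k := by
  unfold g
  apply one_div_le_one_div_of_le
  · positivity
  · apply pow_le_pow_left₀ (by positivity)
    exact_mod_cast sup_le_sup_right h 1

lemma F_eq (u : V) : (max 1 ‖u‖) ^ (-(4 : ℝ)) = g 4 (nn u) := by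
  rw [norm_eq, g]
  have h1 : max (1:ℝ) (nn u : ℝ) = ((nn u ⊔ 1 : ℕ) : ℝ) := by
    rw [max_comm]; push_cast [Nat.cast_max]; rfl
  rw [h1, Real.rpow_neg (by positivity),
    show (4:ℝ) = ((4:ℕ):ℝ) by norm_num, Real.rpow_natCast, one_div]

lemma shell_card (r k : ℕ) (hk : 1 ≤ k) :
    ((latticeBox 6 r).filter (fun u => nn u = k)).card ≤ 728 * k^5 := by
  have hsub : (latticeBox 6 r).filter (fun u => nn u = k) ⊆
      latticeBox 6 k \ latticeBox 6 (k-1) := by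
    intro u hu
    simp only [Finset.mem_filter] at hu
    rw [Finset.mem_sdiff, mem_box, mem_box]
    omega
  calc ((latticeBox 6 r).filter (fun u => nn u = k)).card
      ≤ (latticeBox 6 k \ latticeBox 6 (k-1)).card := Finset.card_le_card hsub
    _ = (latticeBox 6 k).card - (latticeBox 6 (k-1)).card := by
        rw [Finset.card_sdiff_of_subset]
        intro u hu
        rw [mem_box] at hu ⊢
        omega
    _ ≤ 728 * k^5 := by
        rw [card_box, card_box]
        obtain ⟨j, rfl⟩ : ∃ j, k = j + 1 := ⟨k - 1, by omega⟩
        simp only [Nat.add_sub_cancel]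
        have h3 : (j+1)^3 ≤ (j+1)^5 := Nat.pow_le_pow_right (by omega) (by omega)
        have h1 : (j+1)^1 ≤ (j+1)^5 := Nat.pow_le_pow_right (by omega) (by omega)
        have key : (2*(j+1)+1)^6 ≤ (2*j+1)^6 + 728*(j+1)^5 := by nlinarith [h3, h1]
        omega

lemma sum_shell (gg : ℕ → ℝ) (hgg : ∀ k, 0 ≤ gg k) (r : ℕ) :
    ∑ u ∈ latticeBox 6 r, gg (nn u) ≤ gg 0 + 728 * ∑ k ∈ Finset.Icc 1 r, (k:ℝ)^5 * gg k := by
  have hmaps : ∀ u ∈ latticeBox 6 r, nn u ∈ Finset.range (r+1) := by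
    intro u hu
    rw [mem_box] at hu
    simp only [Finset.mem_range]; omega
  rw [← Finset.sum_fiberwise_of_maps_to hmaps (fun u => gg (nn u))]
  have : ∀ k ∈ Finset.range (r+1),
      ∑ u ∈ (latticeBox 6 r).filter (fun u => nn u = k), gg (nn u)
        ≤ if k = 0 then gg 0 else 728 * ((k:ℝ)^5 * gg k) := by
    intro k _
    have hval : ∑ u ∈ (latticeBox 6 r).filter (fun u => nn u = k), gg (nn u)
        = ((latticeBox 6 r).filter (fun u => nn u = k)).card * gg k := by
      rw [Finset.sum_congr rfl (fun u hu => by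
        rw [(Finset.mem_filter.1 hu).2]), Finset.sum_const, nsmul_eq_mul]
    rw [hval]
    by_cases hk : k = 0
    · subst hk
      simp only [if_pos rfl]
      have : ((latticeBox 6 r).filter (fun u => nn u = 0)).card ≤ 1 := by
        apply Finset.card_le_one.2
        intro a ha b hb
        simp only [Finset.mem_filter] at ha hb
        funext i
        have ha2 := ha.2; have hb2 := hb.2
        have h1 : (a i).natAbs ≤ 0 := ha2 ▸ le_nn a i
        have h2 : (b i).natAbs ≤ 0 := hb2 ▸ le_nn b i
        omega
      calc (((latticeBox 6 r).filter (fun u => nn u = 0)).card : ℝ) * gg 0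
          ≤ 1 * gg 0 := by
            apply mul_le_mul_of_nonneg_right _ (hgg 0)
            exact_mod_cast this
        _ = gg 0 := one_mul _
    · rw [if_neg hk]
      have hcard := shell_card r k (by omega)
      calc (((latticeBox 6 r).filter (fun u => nn u = k)).card : ℝ) * gg k
          ≤ (728 * k^5 : ℕ) * gg k := by
            apply mul_le_mul_of_nonneg_right _ (hgg k)
            exact_mod_cast hcard
        _ = 728 * ((k:ℝ)^5 * gg k) := by push_cast; ring
  calc ∑ k ∈ Finset.range (r+1), ∑ u ∈ (latticeBox 6 r).filter (fun u => nn u = k), gg (nn u)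
      ≤ ∑ k ∈ Finset.range (r+1), if k = 0 then gg 0 else 728 * ((k:ℝ)^5 * gg k) :=
        Finset.sum_le_sum this
    _ = gg 0 + 728 * ∑ k ∈ Finset.Icc 1 r, (k:ℝ)^5 * gg k := by
        have hins : Finset.range (r+1) = insert 0 (Finset.Icc 1 r) := by
          ext k
          simp only [Finset.mem_range, Finset.mem_insert, Finset.mem_Icc]
          omega
        rw [hins, Finset.sum_insert (by simp), if_pos rfl, Finset.mul_sum]
        congr 1
        apply Finset.sum_congr rfl
        intro k hk
        rw [if_neg (by simp only [Finset.mem_Icc] at hk; omega)]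

lemma g_eval (e : ℕ) {k : ℕ} (hk : 1 ≤ k) : g e k = 1 / (k:ℝ)^e := by
  rw [g, sup_eq_left.2 hk]

lemma lemA (r : ℕ) : ∑ u ∈ latticeBox 6 r, g 4 (nn u) ≤ 729 * ((r:ℝ)+1)^2 := by
  calc ∑ u ∈ latticeBox 6 r, g 4 (nn u)
      ≤ g 4 0 + 728 * ∑ k ∈ Finset.Icc 1 r, (k:ℝ)^5 * g 4 k := sum_shell _ (g_nonneg 4) r
    _ ≤ 1 + 728 * ∑ k ∈ Finset.Icc 1 r, (r:ℝ) := by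
        rw [g_zero]
        gcongr with k hk
        simp only [Finset.mem_Icc] at hk
        rw [g_eval 4 hk.1]
        have hk1 : (1:ℝ) ≤ (k:ℝ) := by exact_mod_cast hk.1
        have : (k:ℝ)^5 * (1/(k:ℝ)^4) = k := by field_simp
        rw [this]
        exact_mod_cast hk.2
    _ ≤ 729 * ((r:ℝ)+1)^2 := by
        rw [Finset.sum_const, Nat.card_Icc, nsmul_eq_mul]
        have : ((r + 1 - 1 : ℕ):ℝ) = (r:ℝ) := by push_cast; ring
        rw [this]
        nlinarith [Nat.cast_nonneg (α := ℝ) r]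

lemma lemB (M : ℕ) (_hM : 1 ≤ M) :
    ∑ u ∈ latticeBox 6 M, g 6 (nn u) ≤ 729 + 728 * Real.log M := by
  calc ∑ u ∈ latticeBox 6 M, g 6 (nn u)
      ≤ g 6 0 + 728 * ∑ k ∈ Finset.Icc 1 M, (k:ℝ)^5 * g 6 k := sum_shell _ (g_nonneg 6) M
    _ = 1 + 728 * ∑ k ∈ Finset.Icc 1 M, (k:ℝ)⁻¹ := by
        rw [g_zero]
        congr 1
        rw [Finset.mul_sum, Finset.mul_sum]
        apply Finset.sum_congr rfl
        intro k hk
        simp only [Finset.mem_Icc] at hk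
        rw [g_eval 6 hk.1]
        have hk0 : (0:ℝ) < k := by exact_mod_cast hk.1
        field_simp
    _ ≤ 1 + 728 * (1 + Real.log M) := by
        gcongr
        have := harmonic_le_one_add_log M
        rw [harmonic_eq_sum_Icc] at this
        calc ∑ k ∈ Finset.Icc 1 M, (k:ℝ)⁻¹
            = ((∑ k ∈ Finset.Icc 1 M, (k:ℚ)⁻¹ : ℚ) : ℝ) := by push_cast; rfl
          _ ≤ 1 + Real.log M := by exact_mod_cast this
    _ ≤ 729 + 728 * Real.log M := by ring_nf; linarith

noncomputable def Q (u v : V) : ℝ :=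
  if nn u ≤ nn v then g 4 (nn u) * (g 4 (nn v))^2 else 0

lemma Q_nonneg (u v : V) : 0 ≤ Q u v := by
  unfold Q
  split
  · have := g_nonneg 4 (nn u); have := g_nonneg 4 (nn v); positivity
  · exact le_refl 0

lemma t_le_Q {i j k : V} (h1 : nn i ≤ nn j) (h2 : nn j ≤ nn k) :
    g 4 (nn i) * g 4 (nn j) * g 4 (nn k) ≤ Q i j := by
  rw [Q, if_pos h1, sq]
  have hi := g_nonneg 4 (nn i)
  have hj := g_nonneg 4 (nn j)
  calc g 4 (nn i) * g 4 (nn j) * g 4 (nn k)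
      ≤ g 4 (nn i) * g 4 (nn j) * g 4 (nn j) :=
        mul_le_mul_of_nonneg_left (g_anti 4 h2) (mul_nonneg hi hj)
    _ = g 4 (nn i) * (g 4 (nn j) * g 4 (nn j)) := by ring

lemma t_le (x y : V) :
    g 4 (nn x) * g 4 (nn (x - y)) * g 4 (nn y) ≤
      Q x y + Q y x + Q x (x-y) + Q (x-y) x + Q y (x-y) + Q (x-y) y := by
  set z := x - y with hz
  have n1 := Q_nonneg x y
  have n2 := Q_nonneg y x
  have n3 := Q_nonneg x z
  have n4 := Q_nonneg z x
  have n5 := Q_nonneg y z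
  have n6 := Q_nonneg z y
  rcases le_total (nn x) (nn z) with hxz | hzx <;>
    rcases le_total (nn x) (nn y) with hxy | hyx <;>
      rcases le_total (nn z) (nn y) with hzy | hyz
  · have := t_le_Q hxz hzy
    linarith [this]
  · have h : g 4 (nn x) * g 4 (nn y) * g 4 (nn z) ≤ Q x y := t_le_Q hxy hyz
    nlinarith [h]
  · have h : g 4 (nn y) * g 4 (nn x) * g 4 (nn z) ≤ Q y x := t_le_Q hyx hxz
    nlinarith [h]
  · have h : g 4 (nn y) * g 4 (nn x) * g 4 (nn z) ≤ Q y x := t_le_Q hyx hxz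
    nlinarith [h]
  · have h : g 4 (nn z) * g 4 (nn x) * g 4 (nn y) ≤ Q z x := t_le_Q hzx hxy
    nlinarith [h]
  · have h : g 4 (nn z) * g 4 (nn x) * g 4 (nn y) ≤ Q z x := t_le_Q hzx hxy
    nlinarith [h]
  · have h : g 4 (nn z) * g 4 (nn y) * g 4 (nn x) ≤ Q z y := t_le_Q hzy hyx
    nlinarith [h]
  · have h : g 4 (nn y) * g 4 (nn z) * g 4 (nn x) ≤ Q y z := t_le_Q hyz hzx
    nlinarith [h]

lemma gsq_bound (k : ℕ) : (g 4 k)^2 * (729 * ((k:ℝ)+1)^2) ≤ 2916 * g 6 k := by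
  have hk1 : (1:ℝ) ≤ ((k ⊔ 1 : ℕ) : ℝ) := by exact_mod_cast Nat.one_le_iff_ne_zero.2 (by omega)
  have hk0 : (0:ℝ) < ((k ⊔ 1 : ℕ) : ℝ) := by linarith
  have hle : (k:ℝ) + 1 ≤ 2 * ((k ⊔ 1 : ℕ) : ℝ) := by
    have h : k + 1 ≤ 2 * (k ⊔ 1) := by omega
    calc (k:ℝ) + 1 = ((k+1 : ℕ) : ℝ) := by push_cast; ring
      _ ≤ ((2*(k ⊔ 1) : ℕ) : ℝ) := by exact_mod_cast h
      _ = 2 * ((k ⊔ 1 : ℕ) : ℝ) := by push_cast; ring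
  rw [g, g]
  have key : ((k:ℝ)+1)^2 ≤ 4 * ((k ⊔ 1 : ℕ):ℝ)^2 := by nlinarith
  calc (1 / ((k ⊔ 1 : ℕ):ℝ)^4)^2 * (729 * ((k:ℝ)+1)^2)
      ≤ (1 / ((k ⊔ 1 : ℕ):ℝ)^4)^2 * (729 * (4 * ((k ⊔ 1 : ℕ):ℝ)^2)) := by
        apply mul_le_mul_of_nonneg_left _ (by positivity)
        linarith
    _ = 2916 * (1 / ((k ⊔ 1 : ℕ):ℝ)^6) := by
        field_simp
        ring

lemma T_bound (M : ℕ) (hM : 1 ≤ M) :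
    ∑ u ∈ latticeBox 6 M, ∑ v ∈ latticeBox 6 M, Q u v
      ≤ 2916 * (729 + 728 * Real.log M) := by
  rw [Finset.sum_comm]
  have inner : ∀ v ∈ latticeBox 6 M, ∑ u ∈ latticeBox 6 M, Q u v ≤ 2916 * g 6 (nn v) := by
    intro v _
    have step1 : ∑ u ∈ latticeBox 6 M, Q u v
        = (∑ u ∈ (latticeBox 6 M).filter (fun u => nn u ≤ nn v), g 4 (nn u)) * (g 4 (nn v))^2 := by
      rw [Finset.sum_filter, Finset.sum_mul]
      apply Finset.sum_congr rfl
      intro u _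
      rw [Q]
      split <;> simp
    rw [step1]
    have hsub : (latticeBox 6 M).filter (fun u => nn u ≤ nn v) ⊆ latticeBox 6 (nn v) := by
      intro u hu
      rw [mem_box]
      exact (Finset.mem_filter.1 hu).2
    have h1 : ∑ u ∈ (latticeBox 6 M).filter (fun u => nn u ≤ nn v), g 4 (nn u)
        ≤ 729 * ((nn v : ℝ)+1)^2 := by
      refine le_trans (Finset.sum_le_sum_of_subset_of_nonneg hsub
        fun u _ _ => g_nonneg 4 (nn u)) (lemA _)
    calc (∑ u ∈ (latticeBox 6 M).filter (fun u => nn u ≤ nn v), g 4 (nn u)) * (g 4 (nn v))^2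
        ≤ (729 * ((nn v : ℝ)+1)^2) * (g 4 (nn v))^2 := by
          apply mul_le_mul_of_nonneg_right h1 (by positivity)
      _ = (g 4 (nn v))^2 * (729 * ((nn v : ℝ)+1)^2) := by ring
      _ ≤ 2916 * g 6 (nn v) := gsq_bound _
  calc ∑ v ∈ latticeBox 6 M, ∑ u ∈ latticeBox 6 M, Q u v
      ≤ ∑ v ∈ latticeBox 6 M, 2916 * g 6 (nn v) := Finset.sum_le_sum inner
    _ = 2916 * ∑ v ∈ latticeBox 6 M, g 6 (nn v) := by rw [Finset.mul_sum]
    _ ≤ 2916 * (729 + 728 * Real.log M) := by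
        apply mul_le_mul_of_nonneg_left (lemB M hM) (by norm_num)

lemma pair_sum_le (m : ℕ) (e : V × V → V × V) (he : Function.Injective e)
    (hmem : ∀ x ∈ latticeBox 6 m, ∀ y ∈ latticeBox 6 m,
      (e (x, y)).1 ∈ latticeBox 6 (2*m) ∧ (e (x, y)).2 ∈ latticeBox 6 (2*m)) :
    ∑ x ∈ latticeBox 6 m, ∑ y ∈ latticeBox 6 m, Q (e (x,y)).1 (e (x,y)).2
      ≤ ∑ u ∈ latticeBox 6 (2*m), ∑ v ∈ latticeBox 6 (2*m), Q u v := by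
  rw [← Finset.sum_product', ← Finset.sum_product']
  have himg : ((latticeBox 6 m) ×ˢ (latticeBox 6 m)).image e ⊆
      (latticeBox 6 (2*m)) ×ˢ (latticeBox 6 (2*m)) := by
    intro q hq
    obtain ⟨p, hp, rfl⟩ := Finset.mem_image.1 hq
    rw [Finset.mem_product] at hp ⊢
    obtain ⟨h1, h2⟩ := hp
    have := hmem p.1 h1 p.2 h2
    simpa using this
  calc ∑ p ∈ (latticeBox 6 m) ×ˢ (latticeBox 6 m), Q (e (p.1, p.2)).1 (e (p.1, p.2)).2
      = ∑ q ∈ ((latticeBox 6 m) ×ˢ (latticeBox 6 m)).image e, Q q.1 q.2 := by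
        rw [Finset.sum_image (fun a _ b _ h => he h)]
    _ ≤ ∑ q ∈ (latticeBox 6 (2*m)) ×ˢ (latticeBox 6 (2*m)), Q q.1 q.2 :=
        Finset.sum_le_sum_of_subset_of_nonneg himg (fun q _ _ => Q_nonneg q.1 q.2)

lemma box_mono {m : ℕ} {x : V} (hx : x ∈ latticeBox 6 m) : x ∈ latticeBox 6 (2*m) := by
  rw [mem_box] at hx ⊢; omega

lemma sub_mem {m : ℕ} {x y : V} (hx : x ∈ latticeBox 6 m) (hy : y ∈ latticeBox 6 m) :
    x - y ∈ latticeBox 6 (2*m) := by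
  rw [mem_box] at hx hy ⊢
  have := nn_sub_le x y
  omega

end Tri

set_option maxHeartbeats 1000000 in
open Tri in
/-- Logarithmic divergence of the restricted triangle diagram at `d = 6`: there exists
`C > 0` such that for every `m ≥ 2`,
`∑_{x,y ∈ Λ_m} (1 ∨ ‖x‖)^{-4}·(1 ∨ ‖x-y‖)^{-4}·(1 ∨ ‖y‖)^{-4} ≤ C·log m`. -/
theorem triangle_diagram_log_d6 :
    ∃ C > (0 : ℝ), ∀ m : ℕ, 2 ≤ m →
      ∑ x ∈ latticeBox 6 m, ∑ y ∈ latticeBox 6 m,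
        (max 1 ‖x‖) ^ (-(4 : ℝ)) * (max 1 ‖x - y‖) ^ (-(4 : ℝ)) *
          (max 1 ‖y‖) ^ (-(4 : ℝ)) ≤ C * Real.log m := by
  refine ⟨100000000, by norm_num, ?_⟩
  intro m hm
  have hM : 1 ≤ 2*m := by omega
  set T := ∑ u ∈ latticeBox 6 (2*m), ∑ v ∈ latticeBox 6 (2*m), Q u v with hT
  have hb1 : ∑ x ∈ latticeBox 6 m, ∑ y ∈ latticeBox 6 m, Q x y ≤ T :=
    pair_sum_le m id (fun a b h => h)
      (fun x hx y hy => ⟨box_mono hx, box_mono hy⟩)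
  have hb2 : ∑ x ∈ latticeBox 6 m, ∑ y ∈ latticeBox 6 m, Q y x ≤ T :=
    pair_sum_le m (fun p => (p.2, p.1))
      (fun a b h => by
        obtain ⟨h1, h2⟩ := Prod.mk.injEq .. ▸ h
        exact Prod.ext h2 h1)
      (fun x hx y hy => ⟨box_mono hy, box_mono hx⟩)
  have hb3 : ∑ x ∈ latticeBox 6 m, ∑ y ∈ latticeBox 6 m, Q x (x - y) ≤ T :=
    pair_sum_le m (fun p => (p.1, p.1 - p.2))
      (fun a b h => by
        obtain ⟨h1, h2⟩ := Prod.mk.injEq .. ▸ h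
        refine Prod.ext h1 ?_
        have := h2; rw [h1] at this
        exact sub_right_injective this)
      (fun x hx y hy => ⟨box_mono hx, sub_mem hx hy⟩)
  have hb4 : ∑ x ∈ latticeBox 6 m, ∑ y ∈ latticeBox 6 m, Q (x - y) x ≤ T :=
    pair_sum_le m (fun p => (p.1 - p.2, p.1))
      (fun a b h => by
        obtain ⟨h1, h2⟩ := Prod.mk.injEq .. ▸ h
        refine Prod.ext h2 ?_
        rw [h2] at h1
        exact sub_right_injective h1)
      (fun x hx y hy => ⟨sub_mem hx hy, box_mono hx⟩)
  have hb5 : ∑ x ∈ latticeBox 6 m, ∑ y ∈ latticeBox 6 m, Q y (x - y) ≤ T :=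
    pair_sum_le m (fun p => (p.2, p.1 - p.2))
      (fun a b h => by
        obtain ⟨h1, h2⟩ := Prod.mk.injEq .. ▸ h
        refine Prod.ext ?_ h1
        rw [h1] at h2
        exact sub_left_injective h2)
      (fun x hx y hy => ⟨box_mono hy, sub_mem hx hy⟩)
  have hb6 : ∑ x ∈ latticeBox 6 m, ∑ y ∈ latticeBox 6 m, Q (x - y) y ≤ T :=
    pair_sum_le m (fun p => (p.1 - p.2, p.2))
      (fun a b h => by
        obtain ⟨h1, h2⟩ := Prod.mk.injEq .. ▸ h
        refine Prod.ext ?_ h2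
        rw [h2] at h1
        exact sub_left_injective h1)
      (fun x hx y hy => ⟨sub_mem hx hy, box_mono hy⟩)
  have hlog2 : Real.log 2 ≤ 1 := by
    have := Real.log_two_lt_d9
    linarith
  have hlogm : (1:ℝ)/2 ≤ Real.log m := by
    have h2m : (2:ℝ) ≤ (m:ℝ) := by exact_mod_cast hm
    have := Real.log_le_log (by norm_num) h2m
    have := Real.log_two_gt_d9
    linarith
  have hlog2m : Real.log (2*m : ℕ) = Real.log 2 + Real.log m := by
    push_cast
    rw [Real.log_mul (by norm_num) (by positivity)]
  calc ∑ x ∈ latticeBox 6 m, ∑ y ∈ latticeBox 6 m,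
        (max 1 ‖x‖) ^ (-(4 : ℝ)) * (max 1 ‖x - y‖) ^ (-(4 : ℝ)) * (max 1 ‖y‖) ^ (-(4 : ℝ))
      = ∑ x ∈ latticeBox 6 m, ∑ y ∈ latticeBox 6 m,
          g 4 (nn x) * g 4 (nn (x - y)) * g 4 (nn y) := by
        apply Finset.sum_congr rfl
        intro x _
        apply Finset.sum_congr rfl
        intro y _
        rw [F_eq, F_eq, F_eq]
    _ ≤ ∑ x ∈ latticeBox 6 m, ∑ y ∈ latticeBox 6 m,
          (Q x y + Q y x + Q x (x-y) + Q (x-y) x + Q y (x-y) + Q (x-y) y) :=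
        Finset.sum_le_sum fun x _ => Finset.sum_le_sum fun y _ => t_le x y
    _ = (∑ x ∈ latticeBox 6 m, ∑ y ∈ latticeBox 6 m, Q x y)
        + (∑ x ∈ latticeBox 6 m, ∑ y ∈ latticeBox 6 m, Q y x)
        + (∑ x ∈ latticeBox 6 m, ∑ y ∈ latticeBox 6 m, Q x (x-y))
        + (∑ x ∈ latticeBox 6 m, ∑ y ∈ latticeBox 6 m, Q (x-y) x)
        + (∑ x ∈ latticeBox 6 m, ∑ y ∈ latticeBox 6 m, Q y (x-y))
        + (∑ x ∈ latticeBox 6 m, ∑ y ∈ latticeBox 6 m, Q (x-y) y) := by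
        simp only [Finset.sum_add_distrib]
    _ ≤ 6 * T := by linarith
    _ ≤ 6 * (2916 * (729 + 728 * Real.log (2*m : ℕ))) := by
        have := T_bound (2*m) hM
        rw [hT]
        linarith
    _ ≤ 100000000 * Real.log m := by
        rw [hlog2m]
        nlinarith [hlogm, hlog2]
end
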